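/- Suppose e : [0,1] → ℝ is continuously differentiable and c : [0,1] → ℝ satisfies, for all α, α′ ∈ [0,1], α·e(α) − c(α) ≥ α·e(α′) − c(α′). Then c is differentiable and c′(α) = α·e′(α) for all α ∈ (0,1), hence c(α) = c(0) + α·e(α) − ∫₀^α e(t) dt. -/

import Mathlib

open Asymptotics Set Filter Topology

theorem stmt_8 (e c : ℝ → ℝ) (he : ContDiff ℝ 1 e)
    (hIC : ∀ α ∈ Set.Icc (0:ℝ) 1, ∀ α' ∈ Set.Icc (0:ℝ) 1,
      α * e α - c α ≥ α * e α' - c α') :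
    (∀ α ∈ Set.Ioo (0:ℝ) 1, HasDerivAt c (α * deriv e α) α) ∧
    (∀ α ∈ Set.Icc (0:ℝ) 1, c α = c 0 + α * e α - ∫ t in (0:ℝ)..α, e t) := by
  have hed : Differentiable ℝ e := he.differentiable one_ne_zero
  have hec : Continuous e := hed.continuous
  have key : ∀ α ∈ Icc (0:ℝ) 1, HasDerivWithinAt c (α * deriv e α) (Icc 0 1) α := by
    intro α hα
    have hde : HasDerivAt e (deriv e α) α := (hed α).hasDerivAt
    have h1 : HasDerivWithinAt (fun x => α * e x) (α * deriv e α) (Icc 0 1) α :=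
      (hde.const_mul α).hasDerivWithinAt
    rw [hasDerivWithinAt_iff_isLittleO] at h1 ⊢
    have hr : (fun x => c x - c α - α * (e x - e α)) =O[𝓝[Icc (0:ℝ) 1] α]
        (fun x => (x - α) * (e x - e α)) := by
      rw [isBigO_iff]
      refine ⟨1, ?_⟩
      filter_upwards [self_mem_nhdsWithin] with x hx
      have h2 := hIC x hx α hα
      have h3 := hIC α hα x hx
      have hlow : α * (e x - e α) ≤ c x - c α := by nlinarith
      have hhigh : c x - c α ≤ x * (e x - e α) := by nlinarith
      rw [one_mul, Real.norm_eq_abs, Real.norm_eq_abs, abs_le]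
      constructor
      · nlinarith [abs_nonneg ((x - α) * (e x - e α))]
      · nlinarith [le_abs_self ((x - α) * (e x - e α))]
    have ho : (fun x => (x - α) * (e x - e α)) =o[𝓝[Icc (0:ℝ) 1] α]
        (fun x => x - α) := by
      have h4 : (fun x : ℝ => e x - e α) =o[𝓝[Icc (0:ℝ) 1] α] (fun _ => (1:ℝ)) := by
        rw [isLittleO_one_iff]
        have := (hec.tendsto α).mono_left (nhdsWithin_le_nhds (s := Icc (0:ℝ) 1))
        simpa using this.sub_const (e α)
      have := (isBigO_refl (fun x : ℝ => x - α) (𝓝[Icc (0:ℝ) 1] α)).mul_isLittleO h4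
      simpa using this
    have hsum := h1.add (hr.trans_isLittleO ho)
    have heq : (fun x => c x - c α - (x - α) • (α * deriv e α)) =
        (fun x => α * e x - α * e α - (x - α) • (α * deriv e α)) +
          (fun x => c x - c α - α * (e x - e α)) := by
      funext x
      simp [smul_eq_mul]
      ring
    rw [heq]
    exact hsum
  have part1 : ∀ α ∈ Ioo (0:ℝ) 1, HasDerivAt c (α * deriv e α) α := by
    intro α hα
    exact (key α (Ioo_subset_Icc_self hα)).hasDerivAt (Icc_mem_nhds hα.1 hα.2)
  refine ⟨part1, ?_⟩
  set g : ℝ → ℝ := fun α => c α - α * e α + ∫ t in (0:ℝ)..α, e t with hg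
  have hgd : ∀ α ∈ Icc (0:ℝ) 1, HasDerivWithinAt g 0 (Icc 0 1) α := by
    intro α hα
    have hde : HasDerivAt e (deriv e α) α := (hed α).hasDerivAt
    have h1 : HasDerivAt (fun x : ℝ => x * e x) (1 * e α + α * deriv e α) α :=
      (hasDerivAt_id α).mul hde
    have h2 : HasDerivAt (fun x : ℝ => ∫ t in (0:ℝ)..x, e t) (e α) α :=
      intervalIntegral.integral_hasDerivAt_right (hec.intervalIntegrable 0 α)
        (hec.stronglyMeasurableAtFilter _ _) hec.continuousAt
    have h3 := ((key α hα).sub h1.hasDerivWithinAt).add h2.hasDerivWithinAt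
    have h4 : α * deriv e α - (1 * e α + α * deriv e α) + e α = 0 := by ring
    rw [h4] at h3
    exact h3
  have hgc : ContinuousOn g (Icc 0 1) := fun x hx => (hgd x hx).continuousWithinAt
  have hconst : ∀ α ∈ Icc (0:ℝ) 1, g α = g 0 := by
    intro α hα
    refine constant_of_has_deriv_right_zero hgc ?_ α hα
    intro x hx
    exact (hgd x (Ico_subset_Icc_self hx)).mono_of_mem_nhdsWithin
      (Icc_mem_nhdsGE_of_mem hx)
  intro α hα
  have h5 := hconst α hα
  simp only [hg, zero_mul, intervalIntegral.integral_same, sub_zero, add_zero] at h5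
  linarith
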